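/- Let n ≥ 3 and k be integers with 3 ≤ k ≤ n, and let h₁, …, hₙ be real numbers. Suppose the gradient of f at (h₁,…,hₙ) is collinear with (1,1,…,1), i.e., there exists λ ∈ ℝ such that: Σ_{i=2}^{n} hᵢ − (1/(k−1))·Σ_{i=2}^{k} hᵢ = λ; for every j with 2 ≤ j ≤ k, Σ_{i≠j} hᵢ − (1/(k−1))·h₁ = λ; and for every l with k+1 ≤ l ≤ n, Σ_{i≠l} hᵢ = λ. Then h₁ = 0 and h₂ = h₃ = ⋯ = hₙ. -/
import Mathlib


open Finset

theorem stmt_4 (n k : ℕ) (hn : 3 ≤ n) (hk : 3 ≤ k) (hkn : k ≤ n)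
    (h : Fin n → ℝ)
    (lam : ℝ)
    (grad1 : (∑ i : Fin n, if 1 ≤ (i : ℕ) then h i else 0)
        - (1 / ((k : ℝ) - 1)) * (∑ i : Fin n, if 1 ≤ (i : ℕ) ∧ (i : ℕ) < k then h i else 0)
        = lam)
    (gradj : ∀ j : Fin n, 1 ≤ (j : ℕ) → (j : ℕ) < k →
        (∑ i : Fin n, if i ≠ j then h i else 0) - (1 / ((k : ℝ) - 1)) * h ⟨0, by omega⟩ = lam)
    (gradl : ∀ l : Fin n, k ≤ (l : ℕ) →
        (∑ i : Fin n, if i ≠ l then h i else 0) = lam) :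
    h ⟨0, by omega⟩ = 0 ∧
      ∀ i j : Fin n, 1 ≤ (i : ℕ) → 1 ≤ (j : ℕ) → h i = h j := by
  have hz : (0 : ℕ) < n := by omega
  set z : Fin n := ⟨0, hz⟩ with hzdef
  have ho1 : (1 : ℕ) < n := by omega
  set o : Fin n := ⟨1, ho1⟩ with hodef
  set S : ℝ := ∑ i : Fin n, h i with hSdef
  have hne : ∀ j : Fin n, (∑ i : Fin n, if i ≠ j then h i else 0) = S - h j := by
    intro j
    have key : ∀ i : Fin n, (if i ≠ j then h i else 0) = h i - (if i = j then h i else 0) := by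
      intro i; by_cases hij : i = j <;> simp [hij]
    rw [Finset.sum_congr rfl (fun i _ => key i), Finset.sum_sub_distrib,
      Finset.sum_ite_eq' univ j h]
    simp [hSdef]
  -- all coords with 1 ≤ i < k are equal to h o
  have heq2 : ∀ i : Fin n, 1 ≤ (i : ℕ) → (i : ℕ) < k → h i = h o := by
    intro i h1 h2
    have e1 := gradj i h1 h2
    have e2 := gradj o (by simp [hodef]) (by simp [hodef]; omega)
    rw [hne] at e1 e2
    linarith
  -- first sum
  have hA : (∑ i : Fin n, if 1 ≤ (i : ℕ) then h i else 0) = S - h z := by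
    have key : ∀ i : Fin n, (if 1 ≤ (i : ℕ) then h i else 0) = (if i ≠ z then h i else 0) := by
      intro i
      by_cases hi : i = z
      · subst hi; simp [hzdef]
      · have hv : (i : ℕ) ≠ 0 := by
          intro hc; exact hi (Fin.ext (by simp [hzdef, hc]))
        have : 1 ≤ (i : ℕ) := by omega
        simp [hi, this]
    rw [Finset.sum_congr rfl (fun i _ => key i), hne]
  -- second sum
  have hB : (∑ i : Fin n, if 1 ≤ (i : ℕ) ∧ (i : ℕ) < k then h i else 0)
      = ((k : ℝ) - 1) * h o := by
    have key : ∀ i ∈ (univ : Finset (Fin n)),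
        (if 1 ≤ (i : ℕ) ∧ (i : ℕ) < k then h i else 0)
        = (if 1 ≤ (i : ℕ) ∧ (i : ℕ) < k then h o else 0) := by
      intro i _
      by_cases hc : 1 ≤ (i : ℕ) ∧ (i : ℕ) < k
      · simp only [hc, if_true]; exact heq2 i hc.1 hc.2
      · simp [hc]
    rw [Finset.sum_congr rfl key, ← Finset.sum_filter, Finset.sum_const, nsmul_eq_mul]
    congr 1
    have hcard : (univ.filter fun i : Fin n => 1 ≤ (i : ℕ) ∧ (i : ℕ) < k)
        = (Finset.Ico 1 k).attachFin (fun m hm => lt_of_lt_of_le (Finset.mem_Ico.mp hm).2 hkn) := by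
      ext i
      simp [Finset.mem_attachFin, Finset.mem_Ico]
    rw [hcard, Finset.card_attachFin, Nat.card_Ico]
    push_cast [Nat.cast_sub (by omega : 1 ≤ k)]
    ring
  have hkR : (3 : ℝ) ≤ (k : ℝ) := by exact_mod_cast hk
  have hk1 : ((k : ℝ) - 1) ≠ 0 := by linarith
  have e1 : S - h z - h o = lam := by
    rw [hA, hB] at grad1
    have : 1 / ((k : ℝ) - 1) * (((k : ℝ) - 1) * h o) = h o := by field_simp
    linarith [grad1, this]
  have e2 : S - h o - 1 / ((k : ℝ) - 1) * h z = lam := by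
    have := gradj o (by simp [hodef]) (by simp [hodef]; omega)
    rw [hne] at this
    exact this
  have hc1 : 1 / ((k : ℝ) - 1) < 1 := by
    rw [div_lt_one (by linarith)]
    linarith
  have hz0 : h z = 0 := by
    have hprod : h z * (1 - 1 / ((k : ℝ) - 1)) = 0 := by linear_combination e2 - e1
    rcases mul_eq_zero.mp hprod with h' | h'
    · exact h'
    · exfalso; linarith
  refine ⟨hz0, ?_⟩
  have hall : ∀ i : Fin n, 1 ≤ (i : ℕ) → h i = h o := by
    intro i hi
    by_cases hik : (i : ℕ) < k
    · exact heq2 i hi hik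
    · have := gradl i (by omega)
      rw [hne] at this
      rw [hz0] at e2
      linarith
  intro i j hi hj
  rw [hall i hi, hall j hj]
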